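/- Let K, N be positive integers, H ∈ ℂ^{K×N}, D ∈ ℂ^{K×K} with ‖D‖_F² ≤ ‖H‖_F², and let P^w > 0, P^max > 0 and λ° > 0 be real numbers. Suppose HᴴH + λ°I_N is invertible and the matrix V° = √(P^w) (HᴴH + λ°I_N)⁻¹ Hᴴ D satisfies ‖V°‖_F² = P^max. Then λ° ≤ ‖H‖_F² · √(N · P^w / P^max). (Paper's Proposition 1: the optimal Lagrange multiplier of the single-cell precoding deviation minimization problem lies in the interval (0, ‖H‖_F² √(N P^w / P^max)].) -/

import Mathlib

open Matrix BigOperators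

noncomputable def frobSq {m n : Type*} [Fintype m] [Fintype n] (A : Matrix m n ℂ) : ℝ :=
  ∑ i, ∑ j, ‖A i j‖ ^ 2

lemma frobSq_nonneg {m n : Type*} [Fintype m] [Fintype n] (A : Matrix m n ℂ) :
    0 ≤ frobSq A :=
  Finset.sum_nonneg fun _ _ => Finset.sum_nonneg fun _ _ => sq_nonneg _

lemma frobSq_smul {m n : Type*} [Fintype m] [Fintype n] (c : ℂ) (A : Matrix m n ℂ) :
    frobSq (c • A) = ‖c‖ ^ 2 * frobSq A := by
  simp [frobSq, Finset.mul_sum, mul_pow, Matrix.smul_apply, norm_mul]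

lemma frobSq_mul_le {m n p : Type*} [Fintype m] [Fintype n] [Fintype p]
    (A : Matrix m n ℂ) (B : Matrix n p ℂ) :
    frobSq (A * B) ≤ frobSq A * frobSq B := by
  have h1 : ∀ i j, ‖(A * B) i j‖ ^ 2 ≤ (∑ k, ‖A i k‖ ^ 2) * (∑ k, ‖B k j‖ ^ 2) := by
    intro i j
    have h2 : ‖(A * B) i j‖ ≤ ∑ k, ‖A i k‖ * ‖B k j‖ := by
      rw [Matrix.mul_apply]
      exact (norm_sum_le _ _).trans (le_of_eq (by simp [norm_mul]))
    calc ‖(A * B) i j‖ ^ 2 ≤ (∑ k, ‖A i k‖ * ‖B k j‖) ^ 2 := by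
          exact pow_le_pow_left₀ (norm_nonneg _) h2 2
      _ ≤ _ := Finset.sum_mul_sq_le_sq_mul_sq _ _ _
  calc frobSq (A * B) ≤ ∑ i, ∑ j, (∑ k, ‖A i k‖ ^ 2) * (∑ k, ‖B k j‖ ^ 2) := by
        exact Finset.sum_le_sum fun i _ => Finset.sum_le_sum fun j _ => h1 i j
    _ = (∑ i, ∑ k, ‖A i k‖ ^ 2) * (∑ j, ∑ k, ‖B k j‖ ^ 2) := by
        rw [Finset.sum_mul_sum]
    _ = frobSq A * frobSq B := by
        rw [frobSq, frobSq, Finset.sum_comm (f := fun k j => ‖B k j‖ ^ 2)]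

lemma re_trace_conjTranspose_mul_self {m n : Type*} [Fintype m] [Fintype n]
    (X : Matrix m n ℂ) : (Matrix.trace (Xᴴ * X)).re = frobSq X := by
  simp only [Matrix.trace, Matrix.diag_apply, Matrix.mul_apply, Matrix.conjTranspose_apply,
    Complex.re_sum, frobSq]
  rw [Finset.sum_comm]
  congr 1; ext i; congr 1; ext j
  rw [mul_comm, show star (X i j) = (starRingEnd ℂ) (X i j) from rfl, Complex.mul_conj,
    Complex.ofReal_re, Complex.normSq_eq_norm_sq]

lemma final_calc (n Pw Pmax lam b h : ℝ) (hn : 0 ≤ n) (hPw : 0 < Pw)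
    (hPmax : 0 < Pmax) (hlam : 0 < lam) (hb : 0 ≤ b) (hh : 0 ≤ h)
    (h1 : lam * b ≤ Real.sqrt n * Real.sqrt (b * h))
    (h2 : Pmax ≤ Pw * (b * h)) :
    lam ≤ h * Real.sqrt (n * Pw / Pmax) := by
  have hbh : 0 < b * h := by nlinarith
  have hbp : 0 < b := by
    rcases (mul_pos_iff.mp hbh) with ⟨h1', h2'⟩ | ⟨h1', h2'⟩
    · exact h1'
    · linarith
  have hhp : 0 < h := by
    rcases (mul_pos_iff.mp hbh) with ⟨h1', h2'⟩ | ⟨h1', h2'⟩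
    · exact h2'
    · linarith
  have hsb : 0 < Real.sqrt b := Real.sqrt_pos.mpr hbp
  have h1' : lam * Real.sqrt b ≤ Real.sqrt n * Real.sqrt h := by
    have hx : (lam * Real.sqrt b) * Real.sqrt b ≤
        (Real.sqrt n * Real.sqrt h) * Real.sqrt b := by
      rw [Real.sqrt_mul hb] at h1
      nlinarith [Real.mul_self_sqrt hb]
    exact le_of_mul_le_mul_right hx hsb
  have hsq := mul_le_mul h1' h1' (by positivity) (by positivity)
  have h3 : lam ^ 2 * b ≤ n * h := by
    nlinarith [Real.mul_self_sqrt hb, Real.mul_self_sqrt hn, Real.mul_self_sqrt hh]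
  have target_sq : lam ^ 2 ≤ (h * Real.sqrt (n * Pw / Pmax)) ^ 2 := by
    rw [mul_pow, Real.sq_sqrt (by positivity)]
    rw [mul_div_assoc', le_div_iff₀ hPmax]
    nlinarith [mul_le_mul_of_nonneg_left h2 (sq_nonneg lam),
      mul_le_mul_of_nonneg_right h3 (mul_nonneg hPw.le hhp.le)]
  have hfin := Real.sqrt_le_sqrt target_sq
  rwa [Real.sqrt_sq hlam.le, Real.sqrt_sq (by positivity)] at hfin

theorem stmt0 (K N : ℕ) (hK : 0 < K) (hN : 0 < N)
    (H : Matrix (Fin K) (Fin N) ℂ) (D : Matrix (Fin K) (Fin K) ℂ)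
    (hD : frobSq D ≤ frobSq H)
    (Pw Pmax lam : ℝ) (hPw : 0 < Pw) (hPmax : 0 < Pmax) (hlam : 0 < lam)
    (hinv : IsUnit (Hᴴ * H + (lam : ℂ) • (1 : Matrix (Fin N) (Fin N) ℂ)))
    (hV : frobSq ((Real.sqrt Pw : ℂ) •
        ((Hᴴ * H + (lam : ℂ) • (1 : Matrix (Fin N) (Fin N) ℂ))⁻¹ * Hᴴ * D)) = Pmax) :
    lam ≤ frobSq H * Real.sqrt ((N : ℝ) * Pw / Pmax) := by
  set A : Matrix (Fin N) (Fin N) ℂ := Hᴴ * H + (lam : ℂ) • 1 with hA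
  set B : Matrix (Fin N) (Fin K) ℂ := A⁻¹ * Hᴴ with hB
  have hdet : IsUnit A.det := (Matrix.isUnit_iff_isUnit_det A).mp hinv
  have hAB : A * B = Hᴴ := by
    rw [hB, ← Matrix.mul_assoc, Matrix.mul_nonsing_inv _ hdet, Matrix.one_mul]
  -- Key trace identity
  have e1 : Bᴴ * Hᴴ = (H * B)ᴴ * (H * B) + (lam : ℂ) • (Bᴴ * B) := by
    rw [← hAB, hA]
    simp only [Matrix.conjTranspose_mul, Matrix.add_mul, Matrix.mul_add, Matrix.smul_mul,
      Matrix.mul_smul, Matrix.one_mul, Matrix.mul_one, Matrix.mul_assoc]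
  have key : frobSq (H * B) + lam * frobSq B = (Matrix.trace (B * H)).re := by
    have e2 : (Matrix.trace (Bᴴ * Hᴴ)).re = (Matrix.trace (B * H)).re := by
      rw [show Bᴴ * Hᴴ = (H * B)ᴴ from (Matrix.conjTranspose_mul H B).symm,
        Matrix.trace_conjTranspose, Matrix.trace_mul_comm]
      exact Complex.conj_re _
    rw [← e2, e1, Matrix.trace_add, Matrix.trace_smul, Complex.add_re, smul_eq_mul,
      Complex.re_ofReal_mul, re_trace_conjTranspose_mul_self,
      re_trace_conjTranspose_mul_self]
  -- bound the trace
  have hdiag : (Matrix.trace (B * H)).re ≤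
      Real.sqrt N * Real.sqrt (frobSq B * frobSq H) := by
    have s1 : (Matrix.trace (B * H)).re ≤ ∑ i, ‖(B * H) i i‖ := by
      rw [Matrix.trace, Complex.re_sum]
      exact Finset.sum_le_sum fun i _ => Complex.re_le_norm _
    have s2 : (∑ i, ‖(B * H) i i‖) ^ 2 ≤ (N : ℝ) * ∑ i, ‖(B * H) i i‖ ^ 2 := by
      have := Finset.sum_mul_sq_le_sq_mul_sq Finset.univ (fun _ : Fin N => (1 : ℝ))
        (fun i => ‖(B * H) i i‖)
      simpa using this
    have s3 : ∑ i, ‖(B * H) i i‖ ^ 2 ≤ frobSq (B * H) :=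
      Finset.sum_le_sum fun i _ =>
        Finset.single_le_sum (f := fun j => ‖(B * H) i j‖ ^ 2)
          (fun j _ => sq_nonneg _) (Finset.mem_univ i)
    have s4 : ∑ i, ‖(B * H) i i‖ ≤ Real.sqrt ((N : ℝ) * frobSq (B * H)) := by
      have hnn : 0 ≤ ∑ i, ‖(B * H) i i‖ :=
        Finset.sum_nonneg fun _ _ => norm_nonneg _
      rw [← Real.sqrt_sq hnn]
      apply Real.sqrt_le_sqrt
      calc (∑ i, ‖(B * H) i i‖) ^ 2 ≤ (N : ℝ) * ∑ i, ‖(B * H) i i‖ ^ 2 := s2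
        _ ≤ (N : ℝ) * frobSq (B * H) := by
            exact mul_le_mul_of_nonneg_left s3 (Nat.cast_nonneg N)
    calc (Matrix.trace (B * H)).re ≤ ∑ i, ‖(B * H) i i‖ := s1
      _ ≤ Real.sqrt ((N : ℝ) * frobSq (B * H)) := s4
      _ ≤ Real.sqrt ((N : ℝ) * (frobSq B * frobSq H)) := by
          apply Real.sqrt_le_sqrt
          exact mul_le_mul_of_nonneg_left (frobSq_mul_le B H) (Nat.cast_nonneg N)
      _ = Real.sqrt N * Real.sqrt (frobSq B * frobSq H) := by
          rw [Real.sqrt_mul (Nat.cast_nonneg N)]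
  have h1 : lam * frobSq B ≤ Real.sqrt N * Real.sqrt (frobSq B * frobSq H) := by
    have := frobSq_nonneg (H * B)
    linarith [key, hdiag]
  -- relate Pmax
  have hPm : Pmax = Pw * frobSq (B * D) := by
    rw [← hV, frobSq_smul]
    congr 1
    rw [Complex.norm_real, Real.norm_eq_abs, abs_of_nonneg (Real.sqrt_nonneg _),
      Real.sq_sqrt hPw.le]
  have h2 : Pmax ≤ Pw * (frobSq B * frobSq H) := by
    rw [hPm]
    apply mul_le_mul_of_nonneg_left _ hPw.le
    calc frobSq (B * D) ≤ frobSq B * frobSq D := frobSq_mul_le B D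
      _ ≤ frobSq B * frobSq H := mul_le_mul_of_nonneg_left hD (frobSq_nonneg B)
  exact final_calc N Pw Pmax lam (frobSq B) (frobSq H) (Nat.cast_nonneg N)
    hPw hPmax hlam (frobSq_nonneg B) (frobSq_nonneg H) h1 h2
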